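/- Let u, v ∈ {0,1}^n with Lo(u) ≠ Lo(v), and let x be sampled from the one-offspring version of either one-point crossover or uniform crossover applied to u and v. Then Pr(Lo(x) > min{Lo(u), Lo(v)}) ≥ 1/2. -/

import Mathlib

open scoped ENNReal

/-- The product distribution on `Fin n → X`: each coordinate sampled
independently from `p i`. -/
noncomputable def pmfPi {n : ℕ} {X : Type*} [Fintype X] (p : Fin n → PMF X) :
    PMF (Fin n → X) :=
  PMF.ofFintype (fun f => ∏ i, p i (f i)) (by
    rw [← Fintype.prod_sum]
    exact Finset.prod_eq_one (fun i _ => by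
      rw [← tsum_fintype (L := .unconditional _)]; exact (p i).tsum_coe))

/-- `LeadingOnes`: the number of leading one-bits of the bitstring `x`. -/
def Lo {n : ℕ} (x : Fin n → Bool) : ℕ :=
  (Finset.univ.filter fun i : Fin n => ∀ j ≤ i, x j = true).card

/-- `OneMax`: the number of one-bits of the bitstring `x`. -/
def Om {n : ℕ} (x : Fin n → Bool) : ℕ :=
  (Finset.univ.filter fun i : Fin n => x i = true).card

/-- The two offspring of a mask-based crossover of `u` and `v` with mask `s`:
at each position, the first offspring copies the bit of `u` if `s i` and the
bit of `v` otherwise, the second offspring does the opposite. -/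
def crossPair {n : ℕ} (u v s : Fin n → Bool) : (Fin n → Bool) × (Fin n → Bool) :=
  (fun i => if s i then u i else v i, fun i => if s i then v i else u i)

/-- One-offspring uniform crossover: the mask is uniform (each position
independently copies the bit of `u` or of `v` with probability `1/2`) and the
returned offspring is chosen uniformly among the two offspring. -/
noncomputable def uniformXover {n : ℕ} (u v : Fin n → Bool) : PMF (Fin n → Bool) :=
  (pmfPi fun _ : Fin n => PMF.uniformOfFintype Bool).bind fun s =>
    (PMF.uniformOfFintype Bool).map fun b =>
      if b then (crossPair u v s).1 else (crossPair u v s).2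

/-- The mask corresponding to the cut point `c` of one-point crossover. -/
def onePointMask (n : ℕ) (c : Fin (n + 1)) : Fin n → Bool :=
  fun i => decide ((i : ℕ) < (c : ℕ))

/-- One-offspring one-point crossover: a cut point is chosen uniformly at
random, the first offspring takes the prefix of `u` up to the cut and the
suffix of `v` (the second does the opposite), and the returned offspring is
chosen uniformly among the two. -/
noncomputable def onePointXover {n : ℕ} (u v : Fin n → Bool) : PMF (Fin n → Bool) :=
  (PMF.uniformOfFintype (Fin (n + 1))).bind fun c =>
    (PMF.uniformOfFintype Bool).map fun b =>
      if b then (crossPair u v (onePointMask n c)).1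
      else (crossPair u v (onePointMask n c)).2

lemma lo_le {n : ℕ} (x : Fin n → Bool) : Lo x ≤ n := by
  have := Finset.card_filter_le (Finset.univ : Finset (Fin n))
    (fun i => ∀ j ≤ i, x j = true)
  simpa [Lo] using this

lemma lo_lt_of_prefix {n m : ℕ} (hm : m < n) (x : Fin n → Bool)
    (h : ∀ j : Fin n, (j : ℕ) ≤ m → x j = true) : m < Lo x := by
  have hsub : Finset.Iic (⟨m, hm⟩ : Fin n) ⊆
      Finset.univ.filter fun i : Fin n => ∀ j ≤ i, x j = true := by
    intro i hi
    simp only [Finset.mem_Iic] at hi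
    simp only [Finset.mem_filter, Finset.mem_univ, true_and]
    intro j hj
    exact h j (le_trans (Fin.le_def.mp hj) (Fin.le_def.mp hi))
  have := Finset.card_le_card hsub
  rw [Fin.card_Iic] at this
  simp only [Fin.val_mk] at this
  unfold Lo
  omega

lemma lo_bit {n : ℕ} (x : Fin n → Bool) (j : Fin n) (h : (j : ℕ) < Lo x) :
    x j = true := by
  by_contra hj
  have hsub : (Finset.univ.filter fun i : Fin n => ∀ k ≤ i, x k = true) ⊆
      Finset.Iio j := by
    intro i hi
    simp only [Finset.mem_filter, Finset.mem_univ, true_and] at hi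
    simp only [Finset.mem_Iio]
    by_contra hij
    exact hj (hi j (not_lt.mp hij))
  have := Finset.card_le_card hsub
  rw [Fin.card_Iio] at this
  exact absurd h (by unfold Lo; omega)

lemma good {n : ℕ} (u v : Fin n → Bool) (h : Lo u < Lo v) (s : Fin n → Bool) :
    Lo u < Lo (crossPair u v s).1 ∨ Lo u < Lo (crossPair u v s).2 := by
  have hn : Lo u < n := lt_of_lt_of_le h (lo_le v)
  set m : Fin n := ⟨Lo u, hn⟩ with hmdef
  have key : ∀ j : Fin n, (j : ℕ) ≤ Lo u → j ≠ m → u j = true ∧ v j = true := by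
    intro j hj hjm
    have hlt : (j : ℕ) < Lo u := by
      rcases lt_or_eq_of_le hj with h' | h'
      · exact h'
      · exact absurd (Fin.ext h') hjm
    exact ⟨lo_bit u j hlt, lo_bit v j (hlt.trans h)⟩
  have hvm : v m = true := lo_bit v m h
  by_cases hs : s m = true
  · right
    apply lo_lt_of_prefix hn
    intro j hj
    simp only [crossPair]
    by_cases hjm : j = m
    · subst hjm; simp [hs, hvm]
    · rcases key j hj hjm with ⟨h1, h2⟩
      by_cases hsj : s j = true <;> simp [hsj, h1, h2]
  · left
    apply lo_lt_of_prefix hn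
    intro j hj
    simp only [crossPair]
    by_cases hjm : j = m
    · subst hjm; simp [hs, hvm]
    · rcases key j hj hjm with ⟨h1, h2⟩
      by_cases hsj : s j = true <;> simp [hsj, h1, h2]

lemma good' {n : ℕ} (u v : Fin n → Bool) (hne : Lo u ≠ Lo v) (s : Fin n → Bool) :
    min (Lo u) (Lo v) < Lo (crossPair u v s).1 ∨
      min (Lo u) (Lo v) < Lo (crossPair u v s).2 := by
  rcases hne.lt_or_gt with h | h
  · rw [min_eq_left h.le]; exact good u v h s
  · rw [min_eq_right h.le]
    have hswap : crossPair v u s = ((crossPair u v s).2, (crossPair u v s).1) := by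
      simp [crossPair]
    rcases good v u h s with h' | h' <;> rw [hswap] at h'
    · exact Or.inr h'
    · exact Or.inl h'

lemma half_le {α β : Type*} (q : PMF α) (F G : α → β) (E : Set β)
    (h : ∀ a, F a ∈ E ∨ G a ∈ E) :
    ENNReal.ofReal (1 / 2) ≤
      (q.bind fun a => (PMF.uniformOfFintype Bool).map
        fun b => if b then F a else G a).toOuterMeasure E := by
  rw [PMF.toOuterMeasure_bind_apply]
  have hhalf : ENNReal.ofReal (1 / 2) = (2 : ℝ≥0∞)⁻¹ := by
    rw [ENNReal.ofReal_div_of_pos (by norm_num)]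
    simp [ENNReal.ofReal_one, ENNReal.ofReal_ofNat, one_div]
  rw [hhalf]
  have hb : ∀ a, (2 : ℝ≥0∞)⁻¹ ≤
      ((PMF.uniformOfFintype Bool).map
        fun b => if b then F a else G a).toOuterMeasure E := by
    intro a
    rw [PMF.toOuterMeasure_map_apply, PMF.toOuterMeasure_apply, tsum_bool]
    rcases h a with hmem | hmem
    · have : Set.indicator ((fun b => if b then F a else G a) ⁻¹' E)
          (PMF.uniformOfFintype Bool) true = (2 : ℝ≥0∞)⁻¹ := by
        rw [Set.indicator_of_mem (by simpa using hmem)]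
        simp [PMF.uniformOfFintype_apply]
      rw [← this]; exact le_add_self
    · have : Set.indicator ((fun b => if b then F a else G a) ⁻¹' E)
          (PMF.uniformOfFintype Bool) false = (2 : ℝ≥0∞)⁻¹ := by
        rw [Set.indicator_of_mem (by simpa using hmem)]
        simp [PMF.uniformOfFintype_apply]
      rw [← this]; exact le_self_add
  calc (2 : ℝ≥0∞)⁻¹ = (∑' a, q a) * (2 : ℝ≥0∞)⁻¹ := by rw [q.tsum_coe, one_mul]
    _ = ∑' a, q a * (2 : ℝ≥0∞)⁻¹ := (ENNReal.tsum_mul_right).symm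
    _ ≤ ∑' a, q a * _ := ENNReal.tsum_le_tsum fun a =>
        mul_le_mul_right (hb a) _

/-- **Lemma 2(2)**: if `Lo(u) ≠ Lo(v)` and `x` is sampled from the
one-offspring version of one-point or uniform crossover applied to `u, v`,
then `Pr(Lo(x) > min{Lo(u), Lo(v)}) ≥ 1/2`. -/
theorem crossover_improves_leading_ones
    {n : ℕ} (u v : Fin n → Bool)
    (pxor : (Fin n → Bool) → (Fin n → Bool) → PMF (Fin n → Bool))
    (hxor : pxor = uniformXover ∨ pxor = onePointXover)
    (hne : Lo u ≠ Lo v) :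
    ENNReal.ofReal (1 / 2) ≤
      (pxor u v).toOuterMeasure {x | min (Lo u) (Lo v) < Lo x} := by
  rcases hxor with h | h <;> subst h
  · exact half_le _ (fun s => (crossPair u v s).1) (fun s => (crossPair u v s).2)
      _ (fun s => good' u v hne s)
  · exact half_le _ (fun c => (crossPair u v (onePointMask n c)).1)
      (fun c => (crossPair u v (onePointMask n c)).2)
      _ (fun c => good' u v hne (onePointMask n c))
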